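/- Let H be a real Hilbert space, C a nonempty closed convex subset, g convex, differentiable with β-Lipschitz gradient, κ > 0, x ∈ H. Consider the iteration x_{n+1} = x_n + λ_n(P_C((x_n − γ_n(κ∇g(x_n) − x))/(1+γ_n)) − x_n), with 0 < γ̲ ≤ γ_n ≤ γ̄ < 2/(κβ) and 0 < λ̲ ≤ λ_n ≤ 1. Then ‖x_n − prox_{ι_C+κg}x‖ ≤ ρⁿ‖x₀ − prox_{ι_C+κg}x‖ where ρ = 1 − λ̲γ̲/(1+γ̲). -/

import Mathlib

open Set Filter Topology intervalIntegral

section Aux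
variable {H : Type*} [NormedAddCommGroup H] [InnerProductSpace ℝ H] [CompleteSpace H]
local notation "⟪" a ", " b "⟫" => @inner ℝ _ _ a b

lemma stmt14_dirDeriv {g : H → ℝ} {gr : H → H} (hgrad : ∀ w, HasGradientAt g (gr w) w)
    (w d : H) (t₀ : ℝ) :
    HasDerivAt (fun t : ℝ => g (w + t • d)) ⟪gr (w + t₀ • d), d⟫ t₀ := by
  have hline : HasDerivAt (fun t : ℝ => w + t • d) d t₀ := by
    simpa using ((hasDerivAt_id t₀).smul_const d).const_add w
  have h := (hgrad (w + t₀ • d)).hasFDerivAt.comp_hasDerivAt t₀ hline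
  simp at h; exact h

lemma stmt14_deriv_le_of_slope {ψ : ℝ → ℝ} {m a : ℝ} (h : HasDerivAt ψ m 0)
    (hb : ∀ t ∈ Ioc (0:ℝ) 1, (ψ t - ψ 0) / t ≤ a) : m ≤ a := by
  have hslope : Tendsto (slope ψ 0) (𝓝[>] 0) (𝓝 m) :=
    (hasDerivAt_iff_tendsto_slope.1 h).mono_left
      (nhdsWithin_mono _ (fun t ht => by simpa using ne_of_gt ht))
  refine le_of_tendsto hslope ?_
  filter_upwards [Ioc_mem_nhdsGT_of_mem (by simp : (0:ℝ) ∈ Ico (0:ℝ) 1)] with t ht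
  simpa [slope_def_field] using hb t ht

lemma stmt14_le_deriv_of_slope {ψ : ℝ → ℝ} {m a : ℝ} (h : HasDerivAt ψ m 0)
    (hb : ∀ t ∈ Ioc (0:ℝ) 1, a ≤ (ψ t - ψ 0) / t) : a ≤ m := by
  have := stmt14_deriv_le_of_slope (a := -a) h.neg (fun t ht => by
    have h1 := hb t ht
    have h2 : (-ψ t - -ψ 0) / t = -((ψ t - ψ 0) / t) := by ring
    simp only [Pi.neg_apply]; rw [h2]; linarith)
  linarith

/-- gradient inequality for convex functions -/
lemma stmt14_grad_ineq {g : H → ℝ} {gr : H → H} (hg : ConvexOn ℝ univ g)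
    (hgrad : ∀ w, HasGradientAt g (gr w) w) (w y : H) :
    g w + ⟪gr w, y - w⟫ ≤ g y := by
  have hd : HasDerivAt (fun t : ℝ => g (w + t • (y - w))) ⟪gr w, y - w⟫ 0 := by
    simpa using stmt14_dirDeriv hgrad w (y - w) 0
  have hs : ∀ t ∈ Ioc (0:ℝ) 1,
      (g (w + t • (y - w)) - g (w + (0:ℝ) • (y - w))) / t ≤ g y - g w := by
    intro t ht
    have key : g (w + t • (y - w)) ≤ (1 - t) * g w + t * g y := by
      have := hg.2 (mem_univ w) (mem_univ y) (by linarith [ht.2] : (0:ℝ) ≤ 1 - t)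
        (le_of_lt ht.1) (by ring)
      have he : (1 - t) • w + t • y = w + t • (y - w) := by
        rw [smul_sub]; module
      rw [he] at this; simpa using this
    rw [div_le_iff₀ ht.1]
    simp only [zero_smul, add_zero]
    nlinarith [ht.1]
  have := stmt14_deriv_le_of_slope hd (by simpa using hs)
  linarith

/-- descent lemma -/
lemma stmt14_descent {g : H → ℝ} {gr : H → H} (hgrad : ∀ w, HasGradientAt g (gr w) w)
    {β : NNReal} (hlip : LipschitzWith β gr) (w y : H) :
    g y ≤ g w + ⟪gr w, y - w⟫ + (β : ℝ) / 2 * ‖y - w‖ ^ 2 := by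
  set d := y - w with hd
  set φ : ℝ → ℝ := fun t => ⟪gr (w + t • d), d⟫ with hφ
  have hcont : Continuous φ := by
    have : Continuous fun t : ℝ => gr (w + t • d) :=
      hlip.continuous.comp (by continuity)
    exact (this.inner continuous_const)
  have hderiv : ∀ t ∈ uIcc (0:ℝ) 1,
      HasDerivAt (fun t : ℝ => g (w + t • d)) (φ t) t := fun t _ => stmt14_dirDeriv hgrad w d t
  have hint : IntervalIntegrable φ MeasureTheory.volume 0 1 := hcont.intervalIntegrable _ _
  have hftc : ∫ t in (0:ℝ)..1, φ t = g (w + (1:ℝ) • d) - g (w + (0:ℝ) • d) :=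
    integral_eq_sub_of_hasDerivAt hderiv hint
  have h1 : g y - g w = ∫ t in (0:ℝ)..1, φ t := by
    rw [hftc]; simp [hd]
  have hbound : ∀ t ∈ Icc (0:ℝ) 1, φ t ≤ φ 0 + (β : ℝ) * t * ‖d‖ ^ 2 := by
    intro t ht
    have h2 : φ t - φ 0 = ⟪gr (w + t • d) - gr w, d⟫ := by
      simp [hφ, inner_sub_left]
    have h3 : ⟪gr (w + t • d) - gr w, d⟫ ≤ ‖gr (w + t • d) - gr w‖ * ‖d‖ :=
      real_inner_le_norm _ _
    have h4 : ‖gr (w + t • d) - gr w‖ ≤ (β : ℝ) * (t * ‖d‖) := by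
      have := hlip.dist_le_mul (w + t • d) w
      rw [dist_eq_norm] at this
      simpa [norm_smul, abs_of_nonneg ht.1] using this
    nlinarith [norm_nonneg d, ht.1, norm_nonneg (gr (w + t • d) - gr w)]
  have hintle : ∫ t in (0:ℝ)..1, φ t ≤ ∫ t in (0:ℝ)..1, (φ 0 + (β : ℝ) * t * ‖d‖ ^ 2) := by
    apply integral_mono_on (by norm_num) hint
    · exact (Continuous.intervalIntegrable (by continuity) _ _)
    · exact hbound
  have hval : ∫ t in (0:ℝ)..1, (φ 0 + (β : ℝ) * t * ‖d‖ ^ 2) = φ 0 + (β : ℝ) / 2 * ‖d‖ ^ 2 := by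
    rw [intervalIntegral.integral_add (by norm_num) (Continuous.intervalIntegrable (by continuity) _ _)]
    have h5 : (fun t : ℝ => (β:ℝ) * t * ‖d‖^2) = fun t : ℝ => ((β:ℝ) * ‖d‖^2) * t := by
      funext t; ring
    rw [h5, intervalIntegral.integral_const_mul, integral_id]
    simp; ring
  have hφ0 : φ 0 = ⟪gr w, d⟫ := by simp [hφ]
  rw [hval, hφ0] at hintle
  linarith [h1 ▸ hintle]

/-- Baillon–Haddad / cocoercivity -/
lemma stmt14_cocoercive {g : H → ℝ} {gr : H → H} (hg : ConvexOn ℝ univ g)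
    (hgrad : ∀ w, HasGradientAt g (gr w) w) {β : NNReal} (hβ : 0 < (β:ℝ))
    (hlip : LipschitzWith β gr) (w v : H) :
    (1 / (β:ℝ)) * ‖gr w - gr v‖ ^ 2 ≤ ⟪gr w - gr v, w - v⟫ := by
  have key : ∀ w y : H, g w + ⟪gr w, y - w⟫ + 1/(2*(β:ℝ)) * ‖gr y - gr w‖^2 ≤ g y := by
    intro w y
    set Δ := gr y - gr w with hΔ
    set y' := y - ((β:ℝ))⁻¹ • Δ with hy'
    have h1 := stmt14_grad_ineq hg hgrad w y'
    have h2 := stmt14_descent hgrad hlip y y'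
    have e1 : y' - y = -(((β:ℝ))⁻¹ • Δ) := by rw [hy']; abel
    have e2 : ⟪gr y, y' - y⟫ = -(β:ℝ)⁻¹ * ⟪gr y, Δ⟫ := by
      rw [e1, inner_neg_right, real_inner_smul_right]; ring
    have e3 : ‖y' - y‖^2 = (β:ℝ)⁻¹^2 * ‖Δ‖^2 := by
      rw [e1, norm_neg, norm_smul]
      simp [abs_of_nonneg (le_of_lt (inv_pos.2 hβ))]
      ring
    have e4 : ⟪gr w, y' - w⟫ = ⟪gr w, y - w⟫ - (β:ℝ)⁻¹ * ⟪gr w, Δ⟫ := by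
      have : y' - w = (y - w) - ((β:ℝ))⁻¹ • Δ := by rw [hy']; abel
      rw [this, inner_sub_right, real_inner_smul_right]
    have e5 : ⟪gr y, Δ⟫ - ⟪gr w, Δ⟫ = ‖Δ‖^2 := by
      rw [hΔ, ← inner_sub_left, real_inner_self_eq_norm_sq]
    rw [e4] at h1
    rw [e2, e3] at h2
    have hβ0 : (β:ℝ) ≠ 0 := ne_of_gt hβ
    have e5' : (β:ℝ)⁻¹ * (⟪gr y, Δ⟫ - ⟪gr w, Δ⟫) = (β:ℝ)⁻¹ * ‖Δ‖^2 := by rw [e5]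
    have i1 : (β:ℝ)/2 * ((β:ℝ)⁻¹^2 * ‖Δ‖^2) = 1/(2*(β:ℝ)) * ‖Δ‖^2 := by
      field_simp
    have i3 : (β:ℝ)⁻¹ * ‖Δ‖^2 = 2 * (1/(2*(β:ℝ)) * ‖Δ‖^2) := by
      field_simp
    linarith
  have k1 := key w v
  have k2 := key v w
  have e : ⟪gr w, v - w⟫ + ⟪gr v, w - v⟫ = -⟪gr w - gr v, w - v⟫ := by
    rw [inner_sub_left]
    have : (v : H) - w = -(w - v) := by abel
    rw [this, inner_neg_right]; ring
  have hn : ‖gr v - gr w‖^2 = ‖gr w - gr v‖^2 := by rw [norm_sub_rev]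
  have hsum : 1/(2*(β:ℝ))*‖gr w - gr v‖^2 + 1/(2*(β:ℝ))*‖gr w - gr v‖^2
      ≤ ⟪gr w - gr v, w - v⟫ := by
    have hn' : 1/(2*(β:ℝ))*‖gr v - gr w‖^2 = 1/(2*(β:ℝ))*‖gr w - gr v‖^2 := by rw [hn]
    linarith
  have hhalf : (1:ℝ)/(β:ℝ) * ‖gr w - gr v‖^2
      = 1/(2*(β:ℝ))*‖gr w - gr v‖^2 + 1/(2*(β:ℝ))*‖gr w - gr v‖^2 := by
    field_simp; ring
  linarith

/-- projection variational inequality from IsMinOn -/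
lemma stmt14_proj_vi {C : Set H} (hC_conv : Convex ℝ C) {u p : H} (hp : p ∈ C)
    (hmin : IsMinOn (fun c => ‖c - u‖) C p) :
    ∀ c ∈ C, ⟪u - p, c - p⟫ ≤ 0 := by
  haveI : Nonempty C := ⟨⟨p, hp⟩⟩
  have heq : ‖u - p‖ = ⨅ w : C, ‖u - (w : H)‖ := by
    refine le_antisymm (le_ciInf fun w => ?_) ?_
    · have := hmin w.2
      simpa [norm_sub_rev] using this
    · exact ciInf_le ⟨0, fun r ⟨w, hw⟩ => hw ▸ norm_nonneg _⟩ (⟨p, hp⟩ : C)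
  exact (norm_eq_iInf_iff_real_inner_le_zero hC_conv hp).1 heq

/-- contraction property from two variational inequalities -/
lemma stmt14_proj_contract {C : Set H} {u₁ u₂ p₁ p₂ : H} (hp₁ : p₁ ∈ C) (hp₂ : p₂ ∈ C)
    (h₁ : ∀ c ∈ C, ⟪u₁ - p₁, c - p₁⟫ ≤ 0) (h₂ : ∀ c ∈ C, ⟪u₂ - p₂, c - p₂⟫ ≤ 0) :
    ‖p₁ - p₂‖ ≤ ‖u₁ - u₂‖ := by
  have k1 := h₁ p₂ hp₂
  have k2 := h₂ p₁ hp₁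
  have e : ⟪u₁ - p₁, p₂ - p₁⟫ + ⟪u₂ - p₂, p₁ - p₂⟫
      = -⟪u₁ - u₂, p₁ - p₂⟫ + ‖p₁ - p₂‖^2 := by
    have h3 : p₂ - p₁ = -(p₁ - p₂) := by abel
    rw [h3, inner_neg_right, ← real_inner_self_eq_norm_sq]
    rw [show u₁ - p₁ = (u₁ - u₂) - (p₁ - p₂) + (u₂ - p₂) by abel, inner_add_left,
      inner_sub_left]
    ring
  have h4 : ‖p₁ - p₂‖^2 ≤ ⟪u₁ - u₂, p₁ - p₂⟫ := by linarith
  have h5 : ⟪u₁ - u₂, p₁ - p₂⟫ ≤ ‖u₁ - u₂‖ * ‖p₁ - p₂‖ := real_inner_le_norm _ _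
  rcases eq_or_lt_of_le (norm_nonneg (p₁ - p₂)) with h | h
  · rw [← h]; exact norm_nonneg _
  · have := h4.trans h5
    rw [pow_two] at this
    exact le_of_mul_le_mul_right (by linarith) h

/-- optimality condition for xstar -/
lemma stmt14_opt_vi {C : Set H} (hC_conv : Convex ℝ C) {g : H → ℝ} {gr : H → H}
    (hgrad : ∀ w, HasGradientAt g (gr w) w) {κ : ℝ} (x : H)
    {xstar : H} (hxstarC : xstar ∈ C)
    (hxstar : IsMinOn (fun y => (1/2) * ‖y - x‖^2 + κ * g y) C xstar) :
    ∀ c ∈ C, 0 ≤ ⟪(xstar - x) + κ • gr xstar, c - xstar⟫ := by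
  intro c hc
  have hψ1 : ∀ t : ℝ, (1/2) * ‖(xstar + t • (c - xstar)) - x‖^2
      = (1/2)*‖xstar - x‖^2 + ⟪xstar - x, c - xstar⟫ * t
        + (1/2)*‖c - xstar‖^2 * t^2 := by
    intro t
    have he : (xstar + t • (c - xstar)) - x = (xstar - x) + t • (c - xstar) := by abel
    rw [he, norm_add_sq_real, real_inner_smul_right, norm_smul]
    simp only [mul_pow, sq_abs, Real.norm_eq_abs]
    ring
  have hd1 : HasDerivAt (fun t : ℝ => (1/2)*‖xstar - x‖^2
        + ⟪xstar - x, c - xstar⟫ * t + (1/2)*‖c - xstar‖^2 * t^2)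
      ⟪xstar - x, c - xstar⟫ 0 := by
    have h := (((hasDerivAt_id (0:ℝ)).const_mul ⟪xstar - x, c - xstar⟫).const_add
        ((1/2)*‖xstar - x‖^2)).add ((hasDerivAt_pow 2 (0:ℝ)).const_mul ((1/2)*‖c - xstar‖^2))
    simp at h ⊢; exact h
  have hd2 : HasDerivAt (fun t : ℝ => κ * g (xstar + t • (c - xstar)))
      (κ * ⟪gr xstar, c - xstar⟫) 0 := by
    simpa using (stmt14_dirDeriv hgrad xstar (c - xstar) 0).const_mul κ
  have hψ : HasDerivAt
      (fun t : ℝ => (1/2)*‖(xstar + t • (c - xstar)) - x‖^2 + κ * g (xstar + t • (c - xstar)))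
      (⟪xstar - x, c - xstar⟫ + κ*⟪gr xstar, c - xstar⟫) 0 := by
    have he : (fun t : ℝ => (1/2)*‖(xstar + t • (c - xstar)) - x‖^2
          + κ * g (xstar + t • (c - xstar)))
        = fun t : ℝ => ((1/2)*‖xstar - x‖^2 + ⟪xstar - x, c - xstar⟫ * t
          + (1/2)*‖c - xstar‖^2 * t^2) + κ * g (xstar + t • (c - xstar)) := by
      funext t; rw [hψ1 t]
    rw [he]; exact hd1.add hd2
  have hkey : 0 ≤ ⟪xstar - x, c - xstar⟫ + κ*⟪gr xstar, c - xstar⟫ := by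
    refine stmt14_le_deriv_of_slope hψ ?_
    intro t ht
    have hmem : xstar + t • (c - xstar) ∈ C := by
      have := hC_conv hxstarC hc (by linarith [ht.2] : (0:ℝ) ≤ 1 - t) (le_of_lt ht.1)
        (by ring)
      have he : (1 - t) • xstar + t • c = xstar + t • (c - xstar) := by
        rw [smul_sub]; module
      rwa [he] at this
    have hmin : (1/2)*‖xstar - x‖^2 + κ * g xstar
        ≤ (1/2)*‖(xstar + t • (c - xstar)) - x‖^2 + κ * g (xstar + t • (c - xstar)) :=
      hxstar hmem
    simp only [zero_smul, add_zero]
    apply div_nonneg _ (le_of_lt ht.1)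
    linarith
  rw [inner_add_left, real_inner_smul_left]
  linarith

/-- nonexpansiveness of the forward step -/
lemma stmt14_forward_nonexp {g : H → ℝ} {gr : H → H} (hg : ConvexOn ℝ univ g)
    (hgrad : ∀ w, HasGradientAt g (gr w) w) {β : NNReal} (hβ : 0 < (β:ℝ))
    (hlip : LipschitzWith β gr) {κ γ : ℝ} (hκ : 0 < κ) (hγ0 : 0 ≤ γ)
    (hγ2 : γ ≤ 2 / (κ * (β:ℝ))) (w v : H) :
    ‖(w - v) - (γ * κ) • (gr w - gr v)‖ ≤ ‖w - v‖ := by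
  set Δ := gr w - gr v with hΔ
  have hco := stmt14_cocoercive hg hgrad hβ hlip w v
  rw [← hΔ] at hco
  have hsq : ‖(w - v) - (γ * κ) • Δ‖^2
      = ‖w - v‖^2 - 2 * (γ * κ) * ⟪Δ, w - v⟫ + (γ * κ)^2 * ‖Δ‖^2 := by
    rw [norm_sub_sq_real, real_inner_smul_right, norm_smul]
    simp only [mul_pow, sq_abs, Real.norm_eq_abs]
    rw [real_inner_comm]
    ring
  have hγκ : γ * κ ≤ 2 / (β:ℝ) := by
    rw [div_mul_eq_div_div] at hγ2
    calc γ * κ ≤ (2 / κ / (β:ℝ)) * κ :=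
          mul_le_mul_of_nonneg_right hγ2 (le_of_lt hκ)
      _ = 2 / (β:ℝ) := by field_simp
  have hγκ0 : 0 ≤ γ * κ := mul_nonneg hγ0 (le_of_lt hκ)
  have hN : (0:ℝ) ≤ ‖Δ‖^2 := sq_nonneg _
  have h1 : (γ*κ)^2 * ‖Δ‖^2 ≤ (γ*κ) * (2/(β:ℝ)) * ‖Δ‖^2 := by
    nlinarith [mul_nonneg (sub_nonneg.2 hγκ) (mul_nonneg hγκ0 hN)]
  have h2 : (γ*κ) * (2/(β:ℝ)) * ‖Δ‖^2 = 2*(γ*κ) * ((1/(β:ℝ)) * ‖Δ‖^2) := by ring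
  have h3 : 2*(γ*κ) * ((1/(β:ℝ)) * ‖Δ‖^2) ≤ 2*(γ*κ) * ⟪Δ, w - v⟫ :=
    mul_le_mul_of_nonneg_left hco (by linarith)
  have hle : ‖(w - v) - (γ * κ) • Δ‖^2 ≤ ‖w - v‖^2 := by
    rw [hsq]; linarith
  nlinarith [norm_nonneg ((w - v) - (γ * κ) • Δ), norm_nonneg (w - v)]

end Aux

section Main
open Set
local notation "⟪" a ", " b "⟫" => @inner ℝ _ _ a b

/-- Linear convergence of the forward–backward iteration computing
`prox_{ι_C + κ g} x`. -/
theorem stmt_14 {H : Type*} [NormedAddCommGroup H] [InnerProductSpace ℝ H]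
    [CompleteSpace H]
    (C : Set H) (hC_closed : IsClosed C) (hC_conv : Convex ℝ C) (hC_ne : C.Nonempty)
    (g : H → ℝ) (hg_conv : ConvexOn ℝ univ g)
    (gr : H → H) (hgrad : ∀ w, HasGradientAt g (gr w) w)
    (β : NNReal) (hβ : 0 < (β:ℝ)) (hlip : LipschitzWith β gr)
    (κ : ℝ) (hκ : 0 < κ) (x : H)
    (γ lam : ℕ → ℝ) (γlb γub llb : ℝ)
    (hγlb : 0 < γlb) (hγ : ∀ n, γlb ≤ γ n ∧ γ n ≤ γub) (hγub : γub < 2 / (κ * β))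
    (hllb : 0 < llb) (hlam : ∀ n, llb ≤ lam n ∧ lam n ≤ 1)
    -- xstar = prox_{ι_C + κ g} x
    (xstar : H) (hxstarC : xstar ∈ C)
    (hxstar : IsMinOn (fun y => (1/2) * ‖y - x‖^2 + κ * g y) C xstar)
    (xs q : ℕ → H)
    -- q n = P_C ((x_n − γ_n (κ ∇g(x_n) − x)) / (1 + γ_n))
    (hqC : ∀ n, q n ∈ C)
    (hq : ∀ n, IsMinOn
      (fun c => ‖c - (1 + γ n)⁻¹ • (xs n - γ n • (κ • gr (xs n) - x))‖) C (q n))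
    (hiter : ∀ n, xs (n+1) = xs n + lam n • (q n - xs n)) :
    ∀ n, ‖xs n - xstar‖ ≤ (1 - llb * γlb / (1 + γlb))^n * ‖xs 0 - xstar‖ := by
  set ρ := 1 - llb * γlb / (1 + γlb) with hρ
  have h1γlb : 0 < 1 + γlb := by linarith
  have hllb1 : llb ≤ 1 := le_trans (hlam 0).1 (hlam 0).2
  have hρ0 : 0 ≤ ρ := by
    rw [hρ]
    have h2 : llb * γlb / (1 + γlb) ≤ 1 := by
      rw [div_le_one h1γlb]; nlinarith
    linarith
  have step : ∀ n, ‖xs (n+1) - xstar‖ ≤ ρ * ‖xs n - xstar‖ := by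
    intro n
    obtain ⟨hγ1, hγ2⟩ := hγ n
    obtain ⟨hl1, hl2⟩ := hlam n
    have hγpos : 0 < γ n := lt_of_lt_of_le hγlb hγ1
    have h1γ : 0 < (1:ℝ) + γ n := by linarith
    have h1γne : (1:ℝ) + γ n ≠ 0 := ne_of_gt h1γ
    have hqn := hq n
    set u := (1 + γ n)⁻¹ • (xs n - γ n • (κ • gr (xs n) - x)) with hu
    set us := (1 + γ n)⁻¹ • (xstar - γ n • (κ • gr xstar - x)) with hus
    have hqvi : ∀ c ∈ C, ⟪u - q n, c - q n⟫ ≤ 0 :=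
      stmt14_proj_vi hC_conv (hqC n) hqn
    have hsvi : ∀ c ∈ C, ⟪us - xstar, c - xstar⟫ ≤ 0 := by
      intro c hc
      have hvi := stmt14_opt_vi hC_conv hgrad x hxstarC hxstar c hc
      have he : us - xstar
          = ((1 + γ n)⁻¹ * (-(γ n))) • ((xstar - x) + κ • gr xstar) := by
        rw [hus]
        match_scalars <;> field_simp <;> ring
      rw [he, real_inner_smul_left]
      have hneg : (1 + γ n)⁻¹ * (-(γ n)) ≤ 0 :=
        mul_nonpos_of_nonneg_of_nonpos (le_of_lt (inv_pos.2 h1γ)) (by linarith)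
      exact mul_nonpos_of_nonpos_of_nonneg hneg hvi
    have hqx : ‖q n - xstar‖ ≤ ‖u - us‖ :=
      stmt14_proj_contract (hqC n) hxstarC hqvi hsvi
    have hdiff : u - us
        = (1 + γ n)⁻¹ • ((xs n - xstar) - (γ n * κ) • (gr (xs n) - gr xstar)) := by
      rw [hu, hus, ← smul_sub]
      congr 1
      module
    have hnorm : ‖u - us‖
        = (1 + γ n)⁻¹ * ‖(xs n - xstar) - (γ n * κ) • (gr (xs n) - gr xstar)‖ := by
      rw [hdiff, norm_smul, Real.norm_eq_abs, abs_of_pos (inv_pos.2 h1γ)]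
    have hfwd := stmt14_forward_nonexp hg_conv hgrad hβ hlip hκ (le_of_lt hγpos)
      (le_trans hγ2 (le_of_lt hγub)) (xs n) xstar
    have hqx2 : ‖q n - xstar‖ ≤ (1 + γ n)⁻¹ * ‖xs n - xstar‖ := by
      rw [hnorm] at hqx
      exact hqx.trans (mul_le_mul_of_nonneg_left hfwd (le_of_lt (inv_pos.2 h1γ)))
    have hdecomp : xs (n+1) - xstar
        = (1 - lam n) • (xs n - xstar) + lam n • (q n - xstar) := by
      rw [hiter n]; module
    have hlamp : 0 < lam n := lt_of_lt_of_le hllb hl1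
    have hnorm2 : ‖xs (n+1) - xstar‖
        ≤ (1 - lam n) * ‖xs n - xstar‖ + lam n * ((1 + γ n)⁻¹ * ‖xs n - xstar‖) := by
      rw [hdecomp]
      have h1 := norm_add_le ((1 - lam n) • (xs n - xstar)) (lam n • (q n - xstar))
      rw [norm_smul, norm_smul, Real.norm_eq_abs, Real.norm_eq_abs,
        abs_of_nonneg (by linarith : (0:ℝ) ≤ 1 - lam n),
        abs_of_nonneg (le_of_lt hlamp)] at h1
      have h2 : lam n * ‖q n - xstar‖ ≤ lam n * ((1 + γ n)⁻¹ * ‖xs n - xstar‖) :=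
        mul_le_mul_of_nonneg_left hqx2 (le_of_lt hlamp)
      linarith
    have hcoef : (1 - lam n) + lam n * (1 + γ n)⁻¹ ≤ ρ := by
      rw [hρ]
      have hinv : ((1:ℝ) + γ n)⁻¹ = 1 - γ n/(1 + γ n) := by field_simp; ring
      have hfrac : γlb / (1 + γlb) ≤ γ n / (1 + γ n) := by
        rw [div_le_div_iff₀ h1γlb h1γ]; nlinarith
      have hmul : llb * (γlb/(1+γlb)) ≤ lam n * (γ n/(1+γ n)) :=
        mul_le_mul hl1 hfrac (div_nonneg (le_of_lt hγlb) (le_of_lt h1γlb))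
          (le_of_lt hlamp)
      have hassoc : llb * γlb / (1 + γlb) = llb * (γlb/(1+γlb)) := by ring
      rw [hinv]
      have hid : (1 - lam n) + lam n * (1 - γ n/(1+γ n))
          = 1 - lam n * (γ n/(1+γ n)) := by ring
      rw [hid, hassoc]
      linarith
    calc ‖xs (n+1) - xstar‖
        ≤ (1 - lam n) * ‖xs n - xstar‖ + lam n * ((1 + γ n)⁻¹ * ‖xs n - xstar‖) := hnorm2
      _ = ((1 - lam n) + lam n * (1 + γ n)⁻¹) * ‖xs n - xstar‖ := by ring
      _ ≤ ρ * ‖xs n - xstar‖ := mul_le_mul_of_nonneg_right hcoef (norm_nonneg _)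
  intro n
  induction n with
  | zero => simp
  | succ n ih =>
    calc ‖xs (n+1) - xstar‖ ≤ ρ * ‖xs n - xstar‖ := step n
      _ ≤ ρ * (ρ^n * ‖xs 0 - xstar‖) := mul_le_mul_of_nonneg_left ih hρ0
      _ = ρ^(n+1) * ‖xs 0 - xstar‖ := by ring


end Main
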